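/- Consider the rectangular (p+1)×(q+1) Young tableau labelled increasingly left-to-right then top-to-bottom, and let R (resp. C) denote the subgroup of Σ_{(p+1)(q+1)} of permutations fixing each row (resp. each column) setwise. If σ ∈ Σ_{(p+1)(q+1)} fixes the boxes 1 and (p+1)(q+1), permutes each of the 'anti-diagonal label classes' of the tableau among themselves, and there exists τ ∈ C with τσ ∈ R, then σ = id. -/
import Mathlib

/-- An injective map on `Fin n` satisfying `f c ≤ c` is the identity. -/
lemma fin_inj_le_eq_id {n : ℕ} (f : Fin n → Fin n) (hinj : Function.Injective f)
    (hle : ∀ c, (f c : ℕ) ≤ c) : ∀ c, f c = c := by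
  have key : ∀ m : ℕ, ∀ c : Fin n, (c : ℕ) ≤ m → f c = c := by
    intro m
    induction m with
    | zero =>
      intro c hc
      have := hle c
      exact Fin.ext (by omega)
    | succ m ih =>
      intro c hc
      rcases Nat.lt_or_ge (c : ℕ) (m + 1) with h | h
      · exact ih c (by omega)
      · have hc' : (c : ℕ) = m + 1 := by omega
        have := hle c
        rcases Nat.lt_or_ge ((f c : ℕ)) (c : ℕ) with hlt | hge
        · have hfix : f (f c) = f c := ih (f c) (by omega)
          have := hinj hfix
          rw [this] at hlt
          omega
        · exact Fin.ext (by omega)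
  intro c
  exact key (c : ℕ) c le_rfl

/-- Combinatorial core of Coulembier's Proposition `non-zero_detection`.
Boxes of the rectangular `(p+1) × (q+1)` Young tableau are indexed by pairs
`(r, c) : Fin (p+1) × Fin (q+1)` (row `r`, column `c`); the anti-diagonal label classes
are the sets `{(r,c) : r + c = s}`.  If a permutation `σ` of the boxes fixes the first
box `(0,0)` and the last box `(p,q)`, permutes each anti-diagonal label class among
itself, and becomes a row permutation after composition with some column permutation
`τ`, then `σ = id`. -/
theorem young_tableau_rigidity (p q : ℕ)
    (σ : Equiv.Perm (Fin (p + 1) × Fin (q + 1)))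
    (h0 : σ (0, 0) = (0, 0))
    (hlast : σ (Fin.last p, Fin.last q) = (Fin.last p, Fin.last q))
    (hdiag : ∀ x : Fin (p + 1) × Fin (q + 1),
      ((σ x).1 : ℕ) + ((σ x).2 : ℕ) = (x.1 : ℕ) + (x.2 : ℕ))
    (hτ : ∃ τ : Equiv.Perm (Fin (p + 1) × Fin (q + 1)),
      (∀ x, (τ x).2 = x.2) ∧ ∀ x, ((τ * σ) x).1 = x.1) :
    σ = 1 := by
  obtain ⟨τ, hτ2, hτ1⟩ := hτ
  have hmain : ∀ r : ℕ, ∀ hr : r < p + 1, ∀ c : Fin (q + 1),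
      σ (⟨r, hr⟩, c) = (⟨r, hr⟩, c) := by
    intro r
    induction r using Nat.strong_induction_on with
    | _ r ih =>
    intro hr
    -- Step 1: first coordinate of σ (r, c) is at least r
    have hge : ∀ c : Fin (q + 1), r ≤ ((σ (⟨r, hr⟩, c)).1 : ℕ) := by
      intro c
      by_contra h
      push_neg at h
      have e1 : σ ((σ (⟨r, hr⟩, c)).1, (σ (⟨r, hr⟩, c)).2) = σ (⟨r, hr⟩, c) := by
        have := ih ((σ (⟨r, hr⟩, c)).1 : ℕ) h ((σ (⟨r, hr⟩, c)).1.isLt)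
          ((σ (⟨r, hr⟩, c)).2)
        simpa using this
      rw [Prod.mk.eta] at e1
      have e2 := σ.injective e1
      have : ((σ (⟨r, hr⟩, c)).1 : ℕ) = r := by rw [e2]
      omega
    -- Step 2: second coordinate is at most c
    have hle : ∀ c : Fin (q + 1), ((σ (⟨r, hr⟩, c)).2 : ℕ) ≤ (c : ℕ) := by
      intro c
      have hd := hdiag (⟨r, hr⟩, c)
      have := hge c
      have hd' : ((σ (⟨r, hr⟩, c)).1 : ℕ) + ((σ (⟨r, hr⟩, c)).2 : ℕ) = r + (c : ℕ) := hd
      omega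
    -- Step 3: c ↦ (σ (r, c)).2 is injective
    have hinj : Function.Injective (fun c : Fin (q + 1) => (σ (⟨r, hr⟩, c)).2) := by
      intro c c' h
      simp only at h
      have e : (τ * σ) (⟨r, hr⟩, c) = (τ * σ) (⟨r, hr⟩, c') := by
        apply Prod.ext
        · rw [hτ1, hτ1]
        · show (τ (σ _)).2 = (τ (σ _)).2
          rw [hτ2, hτ2, h]
      have := (τ * σ).injective e
      exact (Prod.mk.injEq _ _ _ _).mp this |>.2
    have hfix := fin_inj_le_eq_id _ hinj hle
    intro c
    have h2 : (σ (⟨r, hr⟩, c)).2 = c := hfix c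
    have hd := hdiag (⟨r, hr⟩, c)
    have h2' : ((σ (⟨r, hr⟩, c)).2 : ℕ) = (c : ℕ) := by rw [h2]
    refine Prod.ext (Fin.ext ?_) h2
    show ((σ (⟨r, hr⟩, c)).1 : ℕ) = r
    have hd' : ((σ (⟨r, hr⟩, c)).1 : ℕ) + ((σ (⟨r, hr⟩, c)).2 : ℕ) = r + (c : ℕ) := hd
    omega
  apply Equiv.ext
  intro x
  have := hmain (x.1 : ℕ) x.1.isLt x.2
  simpa using this
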